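/- Let (G, X, M, ℓ) be an instance of the annotated odd cycle transversal problem and let H be a set of vertices of G. Then there is a set of connected components of (G − X) − H whose deletion from G yields a graph G' such that (G' − X) − H has at most 2·(ℓ+1)·(|X| + |H|)² connected components and the instance (G', X, M, ℓ) is a yes-instance if and only if (G, X, M, ℓ) is a yes-instance. -/

import Mathlib

set_option maxHeartbeats 1000000

variable {V : Type}

/-- The graph obtained from `G` by deleting the vertex set `S`
(deleted vertices are kept as isolated vertices). -/
def gdelete (G : SimpleGraph V) (S : Set V) : SimpleGraph V where
  Adj u v := G.Adj u v ∧ u ∉ S ∧ v ∉ S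
  symm := by constructor; intro u v h; exact ⟨h.1.symm, h.2.2, h.2.1⟩
  loopless := by constructor; intro v h; exact h.1.ne rfl

/-- The subgraph of `G` induced by the vertex set `A`
(vertices outside `A` are kept as isolated vertices). -/
def grestrict (G : SimpleGraph V) (A : Set V) : SimpleGraph V := gdelete G Aᶜ

/-- `C` is (the vertex set of) a connected component of the induced subgraph `G[A]`:
`C ⊆ A`, `C` is nonempty and connected, and `C` is closed under adjacency within `A`. -/
def IsCompOf (G : SimpleGraph V) (A C : Set V) : Prop :=
  C ⊆ A ∧ C.Nonempty ∧ (∀ u ∈ C, ∀ v ∈ C, (grestrict G C).Reachable u v) ∧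
    ∀ u ∈ C, ∀ v ∈ A, G.Adj u v → v ∈ C

/-- `M` consists of unordered pairs of distinct vertices of `X`. -/
def PairsOver (M : Set (Sym2 V)) (X : Set V) : Prop :=
  ∀ e ∈ M, ∃ u v : V, u ∈ X ∧ v ∈ X ∧ u ≠ v ∧ e = s(u, v)

/-- `G − S` is bipartite via a proper 2-coloring that moreover assigns equal colors
to every (surviving) monochromatic pair in `M`. -/
def AnnColoring (G : SimpleGraph V) (M : Set (Sym2 V)) (S : Set V) : Prop :=
  ∃ c : V → Bool, (∀ u v : V, u ∉ S → v ∉ S → G.Adj u v → c u ≠ c v) ∧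
    ∀ u v : V, u ∉ S → v ∉ S → s(u, v) ∈ M → c u = c v

/-- The annotated odd cycle transversal instance `(G, X, M, ℓ)` is a yes-instance. -/
def AnnYes (G : SimpleGraph V) (M : Set (Sym2 V)) (ℓ : ℕ) : Prop :=
  ∃ S : Set V, S.ncard ≤ ℓ ∧ AnnColoring G M S


lemma grestrict_adj {G : SimpleGraph V} {B : Set V} {u v : V} :
    (grestrict G B).Adj u v ↔ G.Adj u v ∧ u ∈ B ∧ v ∈ B := by
  simp [grestrict, gdelete]

lemma grestrict_mono {G : SimpleGraph V} {B B' : Set V} (h : B ⊆ B') :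
    grestrict G B ≤ grestrict G B' := by
  intro u v huv
  rw [grestrict_adj] at *
  exact ⟨huv.1, h huv.2.1, h huv.2.2⟩

lemma reach_closed {G : SimpleGraph V} {B C A : Set V} (hBA : B ⊆ A)
    (hcl : ∀ u ∈ C, ∀ v ∈ A, G.Adj u v → v ∈ C) {x y : V}
    (h : (grestrict G B).Reachable x y) (hx : x ∈ C) : y ∈ C := by
  obtain ⟨p⟩ := h
  induction p with
  | nil => exact hx
  | cons hadj p ih =>
    rw [grestrict_adj] at hadj
    exact ih (hcl _ hx _ (hBA hadj.2.2) hadj.1)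

def gcomp (G : SimpleGraph V) (A : Set V) (x : V) : Set V :=
  {y | (grestrict G A).Reachable x y}

lemma mem_gcomp_self (G : SimpleGraph V) (A : Set V) (x : V) : x ∈ gcomp G A x :=
  SimpleGraph.Reachable.refl x

lemma gcomp_subset {G : SimpleGraph V} {A : Set V} {x : V} (hx : x ∈ A) :
    gcomp G A x ⊆ A := by
  intro y hy
  exact reach_closed (le_refl A) (fun u _ v hv _ => hv) hy hx

lemma gcomp_isComp {G : SimpleGraph V} {A : Set V} {x : V} (hx : x ∈ A) :
    IsCompOf G A (gcomp G A x) := by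
  refine ⟨gcomp_subset hx, ⟨x, mem_gcomp_self G A x⟩, ?_, ?_⟩
  · intro u hu v hv
    have key : ∀ a b : V, (grestrict G A).Reachable a b → a ∈ gcomp G A x →
        (grestrict G (gcomp G A x)).Reachable a b := by
      intro a b hab ha
      obtain ⟨p⟩ := hab
      induction p with
      | nil => exact SimpleGraph.Reachable.refl _
      | cons hadj p ih =>
        rename_i c d e
        rw [grestrict_adj] at hadj
        have hd : d ∈ gcomp G A x := ha.trans
          ⟨SimpleGraph.Walk.cons (by rw [grestrict_adj]; exact hadj) .nil⟩
        exact (SimpleGraph.Adj.reachable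
          (by rw [grestrict_adj]; exact ⟨hadj.1, ha, hd⟩)).trans (ih hd)
    exact (key x u hu (mem_gcomp_self G A x)).symm.trans (key x v hv (mem_gcomp_self G A x))
  · intro u hu v hv hadj
    exact hu.trans (SimpleGraph.Adj.reachable
      (by rw [grestrict_adj]; exact ⟨hadj, gcomp_subset hx hu, hv⟩))

lemma comp_eq_gcomp {G : SimpleGraph V} {A C : Set V} (hC : IsCompOf G A C) {x : V}
    (hx : x ∈ C) : C = gcomp G A x := by
  obtain ⟨hsub, _, hreach, hcl⟩ := hC
  apply Set.eq_of_subset_of_subset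
  · intro u hu
    exact SimpleGraph.Reachable.mono (grestrict_mono hsub) (hreach x hx u hu)
  · intro y hy
    exact reach_closed (le_refl A) hcl hy hx

lemma comp_unique {G : SimpleGraph V} {A C C' : Set V} (hC : IsCompOf G A C)
    (hC' : IsCompOf G A C') {x : V} (hx : x ∈ C) (hx' : x ∈ C') : C = C' := by
  rw [comp_eq_gcomp hC hx, comp_eq_gcomp hC' hx']

lemma two_colorings {G' : SimpleGraph V} {f g : V → Bool}
    (hf : ∀ a b, G'.Adj a b → f a ≠ f b) (hg : ∀ a b, G'.Adj a b → g a ≠ g b)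
    {u v : V} (h : G'.Reachable u v) : (f u = f v ↔ g u = g v) := by
  obtain ⟨p⟩ := h
  induction p with
  | nil => simp
  | cons hadj p ih =>
    have h1 := hf _ _ hadj
    have h2 := hg _ _ hadj
    rename_i a b c
    revert h1 h2 ih
    cases f a <;> cases f b <;> cases f c <;> cases g a <;> cases g b <;> cases g c <;> simp

lemma ncard_biUnion_le {α ι : Type*} [Finite α] (F : Finset ι) (f : ι → Set α) :
    (⋃ i ∈ F, f i).ncard ≤ ∑ i ∈ F, (f i).ncard := by
  classical
  induction F using Finset.induction_on with
  | empty => simp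
  | insert a s hnotmem ih =>
    rw [Finset.set_biUnion_insert, Finset.sum_insert hnotmem]
    exact le_trans (Set.ncard_union_le _ _) (by omega)

lemma boolhelp : ∀ a b e x y cu cv cw cw' : Bool, cw = xor a e → cw' = xor b (!e) →
    xor a b = xor x y → cw ≠ cu → cw' ≠ cv → (cu = cv ↔ x = y) → False := by decide

/-- bounding the number of components: for an annotated instance
`(G, X, M, ℓ)` and a vertex set `H`, one can delete a set of connected components of
`(G − X) − H` from `G`, obtaining `G'`, so that `(G' − X) − H` has at most
`2(ℓ+1)(|X| + |H|)²` connected components and `(G', X, M, ℓ)` is a yes-instance iff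
`(G, X, M, ℓ)` is. -/
theorem stmt4 [Fintype V] (G : SimpleGraph V) (X : Set V) (M : Set (Sym2 V)) (ℓ : ℕ)
    (hbip : (gdelete G X).Colorable 2) (hM : PairsOver M X) (H : Set V) :
    ∃ 𝒞 : Set (Set V), (∀ C ∈ 𝒞, IsCompOf G (Xᶜ ∩ Hᶜ) C) ∧
      {C : Set V | IsCompOf G ((X ∪ H ∪ ⋃₀ 𝒞)ᶜ) C}.ncard ≤
        2 * (ℓ + 1) * (X.ncard + H.ncard) ^ 2 ∧
      (AnnYes (gdelete G (⋃₀ 𝒞)) M ℓ ↔ AnnYes G M ℓ) := by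
  classical
  obtain ⟨col⟩ := hbip
  set A : Set V := Xᶜ ∩ Hᶜ with hA
  set D : Set V := X ∪ H with hD
  have hXA : A ⊆ Xᶜ := Set.inter_subset_left
  have hDA : ∀ v : V, v ∉ A → v ∈ D := by
    intro v hv
    rw [hA, Set.mem_inter_iff, not_and_or] at hv
    rw [hD, Set.mem_union]
    rcases hv with h | h <;> simp at h <;> [left; right] <;> exact h
  set cb : V → Bool := fun v => decide (col v = 1) with hcb
  have cb_proper : ∀ u v : V, u ∉ X → v ∉ X → G.Adj u v → cb u ≠ cb v := by
    intro u v hu hv hadj hcc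
    apply col.valid (show (gdelete G X).Adj u v from ⟨hadj, hu, hv⟩)
    have h1 := (col u).isLt
    have h2 := (col v).isLt
    simp only [hcb, decide_eq_decide, Fin.ext_iff] at hcc ⊢
    omega
  set comps : Set (Set V) := {C | IsCompOf G A C} with hcomps
  set RZ : V → V → Bool → Set (Set V) := fun w w' q =>
    {C | C ∈ comps ∧ w ∈ D ∧ w' ∈ D ∧
      ∃ u ∈ C, ∃ v ∈ C, G.Adj w u ∧ G.Adj w' v ∧ xor (cb u) (cb v) = q} with hRZ
  have keep_ex : ∀ w w' q, ∃ K : Set (Set V), K ⊆ RZ w w' q ∧ K.ncard ≤ ℓ + 1 ∧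
      ∀ C ∈ RZ w w' q, C ∉ K → K.ncard = ℓ + 1 := by
    intro w w' q
    by_cases hle : (RZ w w' q).ncard ≤ ℓ + 1
    · exact ⟨RZ w w' q, le_refl _, hle, fun C hC hnC => absurd hC hnC⟩
    · obtain ⟨Kk, hK1, hK2⟩ := Set.exists_subset_card_eq (s := RZ w w' q) (n := ℓ + 1) (by omega)
      exact ⟨Kk, hK1, le_of_eq hK2, fun _ _ _ => hK2⟩
  choose K hK1 hK2 hK3 using keep_ex
  set Mk : Set (Set V) := ⋃ w, ⋃ w', ⋃ q, K w w' q with hMk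
  set 𝒞 : Set (Set V) := comps \ Mk with h𝒞
  set U : Set V := ⋃₀ 𝒞 with hUdef
  have hmem𝒞 : ∀ C ∈ 𝒞, IsCompOf G A C := fun C hC => hC.1
  have hUA : U ⊆ A := by
    intro x hx
    obtain ⟨C, hC, hxC⟩ := hx
    exact (hmem𝒞 C hC).1 hxC
  have hdisj : ∀ C ∈ comps, C ∉ 𝒞 → C ∩ U = ∅ := by
    intro C hC hnC
    apply Set.eq_empty_iff_forall_notMem.2
    intro x hx
    obtain ⟨C', hC', hx'⟩ := hx.2
    exact hnC ((comp_unique hC (hmem𝒞 C' hC') hx.1 hx') ▸ hC')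
  have hUcomp : ∀ x ∈ U, gcomp G A x ∈ 𝒞 ∧ x ∈ gcomp G A x := by
    intro x hx
    obtain ⟨C, hC, hxC⟩ := hx
    have heq : C = gcomp G A x := comp_eq_gcomp (hmem𝒞 C hC) hxC
    exact ⟨heq ▸ hC, heq ▸ hxC⟩
  refine ⟨𝒞, hmem𝒞, ?_, ?_⟩
  · -- counting
    have hXU : (X ∪ H ∪ U)ᶜ = A \ U := by
      rw [Set.compl_union, Set.compl_union, Set.diff_eq, hA, Set.inter_assoc]
    have hset : {C : Set V | IsCompOf G ((X ∪ H ∪ U)ᶜ) C} = comps \ 𝒞 := by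
      rw [hXU]
      ext C
      simp only [Set.mem_setOf_eq, Set.mem_diff]
      constructor
      · rintro ⟨hsub, ⟨x, hx⟩, hreach, hcl⟩
        have hxA : x ∈ A := (hsub hx).1
        have hxU : x ∉ U := (hsub hx).2
        have hC0 : IsCompOf G A (gcomp G A x) := gcomp_isComp hxA
        have hC0c : gcomp G A x ∈ comps := hC0
        have hC0n : gcomp G A x ∉ 𝒞 := fun h => hxU ⟨gcomp G A x, h, mem_gcomp_self G A x⟩
        have hC0U : gcomp G A x ∩ U = ∅ := hdisj _ hC0c hC0n
        have hC0sub : gcomp G A x ⊆ A \ U := by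
          intro y hy
          refine ⟨hC0.1 hy, fun hyU => ?_⟩
          exact absurd hC0U (by rw [Set.eq_empty_iff_forall_notMem]; push_neg; exact ⟨y, hy, hyU⟩)
        have hCeq : C = gcomp G A x := by
          apply Set.eq_of_subset_of_subset
          · intro u hu
            exact reach_closed (hsub.trans Set.diff_subset) hC0.2.2.2
              (hreach x hx u hu) (mem_gcomp_self G A x)
          · intro y hy
            exact reach_closed hC0sub hcl (hC0.2.2.1 x (mem_gcomp_self G A x) y hy) hx
        rw [hCeq]
        exact ⟨hC0c, hC0n⟩
      · rintro ⟨hCc, hCn⟩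
        have hCU : C ∩ U = ∅ := hdisj C hCc hCn
        obtain ⟨hsub, hne, hreach, hcl⟩ := hCc
        refine ⟨?_, hne, hreach, ?_⟩
        · intro y hy
          refine ⟨hsub hy, fun hyU => ?_⟩
          exact absurd hCU (by rw [Set.eq_empty_iff_forall_notMem]; push_neg; exact ⟨y, hy, hyU⟩)
        · intro u hu v hv hadj
          exact hcl u hu v hv.1 hadj
    rw [hset]
    have hDfin : D.Finite := Set.toFinite D
    set F : Finset (V × V × Bool) :=
      hDfin.toFinset ×ˢ hDfin.toFinset ×ˢ (Finset.univ : Finset Bool) with hF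
    have hsub2 : comps \ 𝒞 ⊆ ⋃ t ∈ F, K t.1 t.2.1 t.2.2 := by
      rintro C ⟨hCc, hCn⟩
      have hCM : C ∈ Mk := by
        by_contra hcon
        exact hCn ⟨hCc, hcon⟩
      simp only [hMk, Set.mem_iUnion] at hCM
      obtain ⟨w, w', q, hCK⟩ := hCM
      have hrz := hK1 w w' q hCK
      simp only [Set.mem_iUnion]
      refine ⟨(w, w', q), ?_, hCK⟩
      simp only [hF, Finset.mem_product, Set.Finite.mem_toFinset, Finset.mem_univ, and_true]
      exact ⟨hrz.2.1, hrz.2.2.1⟩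
    calc (comps \ 𝒞).ncard ≤ (⋃ t ∈ F, K t.1 t.2.1 t.2.2).ncard :=
          Set.ncard_le_ncard hsub2 (Set.toFinite _)
      _ ≤ ∑ t ∈ F, (K t.1 t.2.1 t.2.2).ncard := ncard_biUnion_le F _
      _ ≤ ∑ _t ∈ F, (ℓ + 1) := Finset.sum_le_sum (fun t _ => hK2 t.1 t.2.1 t.2.2)
      _ = F.card * (ℓ + 1) := by rw [Finset.sum_const, smul_eq_mul]
      _ ≤ 2 * (ℓ + 1) * (X.ncard + H.ncard) ^ 2 := by
          have hFcard : F.card = D.ncard * (D.ncard * 2) := by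
            rw [hF, Finset.card_product, Finset.card_product, Finset.card_univ,
              ← Set.ncard_eq_toFinset_card D hDfin]
            rfl
          have hDle : D.ncard ≤ X.ncard + H.ncard := Set.ncard_union_le X H
          rw [hFcard, pow_two]
          nlinarith [Nat.mul_le_mul hDle hDle]
  · constructor
    · -- hard direction: G' yes → G yes
      rintro ⟨S, hS, c, h1, h2⟩
      set S' : Set V := S \ U with hS'def
      have hS'le : S'.ncard ≤ ℓ :=
        le_trans (Set.ncard_le_ncard Set.diff_subset (Set.toFinite S)) hS
      have hnotS : ∀ x : V, x ∉ S' → x ∉ U → x ∉ S := by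
        intro x h1x h2x hxS
        exact h1x ⟨hxS, h2x⟩
      have eps_ex : ∀ C : Set V, ∃ e : Bool, C ∈ 𝒞 →
          ∀ w, w ∉ S' → w ∉ U → ∀ u ∈ C, G.Adj w u → c w ≠ xor (cb u) e := by
        intro C
        by_cases hC : C ∈ 𝒞
        swap
        · exact ⟨true, fun h => absurd h hC⟩
        by_contra hcon
        push_neg at hcon
        obtain ⟨-, w, hwS, hwU, u, huC, hwu, hcw⟩ := hcon true
        obtain ⟨-, w', hw'S, hw'U, v, hvC, hw'v, hcw'⟩ := hcon false
        have hCcomp : IsCompOf G A C := hmem𝒞 C hC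
        have hCsubU : C ⊆ U := fun y hy => ⟨C, hC, hy⟩
        have hwD : w ∈ D := by
          by_contra hwD
          have hwA : w ∈ A := by
            by_contra hwA
            exact hwD (hDA w hwA)
          exact hwU (hCsubU (hCcomp.2.2.2 u huC w hwA hwu.symm))
        have hw'D : w' ∈ D := by
          by_contra hw'D
          have hw'A : w' ∈ A := by
            by_contra hw'A
            exact hw'D (hDA w' hw'A)
          exact hw'U (hCsubU (hCcomp.2.2.2 v hvC w' hw'A hw'v.symm))
        set q : Bool := xor (cb u) (cb v) with hq
        have hCrz : C ∈ RZ w w' q := ⟨hC.1, hwD, hw'D, u, huC, v, hvC, hwu, hw'v, rfl⟩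
        have hCnotK : C ∉ K w w' q := by
          intro h
          exact hC.2 (by simp only [hMk, Set.mem_iUnion]; exact ⟨w, w', q, h⟩)
        have hKcard := hK3 w w' q C hCrz hCnotK
        have hV : Nonempty V := ⟨u⟩
        have hCs_ex : ∃ Cs ∈ K w w' q, Cs ∩ S' = ∅ := by
          by_contra hcon2
          push_neg at hcon2
          have hall : ∀ C' : Set V, ∃ x : V, C' ∈ K w w' q → x ∈ C' ∩ S' := by
            intro C'
            by_cases h : C' ∈ K w w' q
            · obtain ⟨x, hx⟩ := hcon2 C' h
              exact ⟨x, fun _ => hx⟩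
            · exact ⟨u, fun h' => absurd h' h⟩
          choose f hf using hall
          have hmaps : ∀ C' ∈ K w w' q, f C' ∈ S' := fun C' h => (hf C' h).2
          have hinj : Set.InjOn f (K w w' q) := by
            intro C1 hc1 C2 hc2 hfeq
            exact comp_unique (hK1 w w' q hc1).1 (hK1 w w' q hc2).1
              (hf C1 hc1).1 (hfeq ▸ (hf C2 hc2).1)
          have := Set.ncard_le_ncard_of_injOn f hmaps hinj (Set.toFinite S')
          omega
        obtain ⟨Cs, hCsK, hCsS⟩ := hCs_ex
        obtain ⟨hCsc, -, -, u', hu'C, v', hv'C, hwu', hw'v', hq'⟩ := hK1 w w' q hCsK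
        have hCsnot𝒞 : Cs ∉ 𝒞 := by
          intro h
          exact h.2 (by simp only [hMk, Set.mem_iUnion]; exact ⟨w, w', q, hCsK⟩)
        have hCsU : Cs ∩ U = ∅ := hdisj Cs hCsc hCsnot𝒞
        have hCsfacts : ∀ x ∈ Cs, x ∉ U ∧ x ∉ S := by
          intro x hx
          have hxU : x ∉ U := fun h =>
            (Set.eq_empty_iff_forall_notMem.1 hCsU x) ⟨hx, h⟩
          have hxS' : x ∉ S' := fun h =>
            (Set.eq_empty_iff_forall_notMem.1 hCsS x) ⟨hx, h⟩
          exact ⟨hxU, hnotS x hxS' hxU⟩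
        have hCscomp : IsCompOf G A Cs := hCsc
        have hcprop : ∀ a b : V, (grestrict G Cs).Adj a b → c a ≠ c b := by
          intro a b hab
          rw [grestrict_adj] at hab
          exact h1 a b (hCsfacts a hab.2.1).2 (hCsfacts b hab.2.2).2
            ⟨hab.1, (hCsfacts a hab.2.1).1, (hCsfacts b hab.2.2).1⟩
        have hcbprop : ∀ a b : V, (grestrict G Cs).Adj a b → cb a ≠ cb b := by
          intro a b hab
          rw [grestrict_adj] at hab
          exact cb_proper a b (hXA (hCscomp.1 hab.2.1)) (hXA (hCscomp.1 hab.2.2)) hab.1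
        have hiff := two_colorings hcprop hcbprop (hCscomp.2.2.1 u' hu'C v' hv'C)
        have hwUn : w ∉ U := hwU
        have hwSn : w ∉ S := hnotS w hwS hwU
        have hw'Sn : w' ∉ S := hnotS w' hw'S hw'U
        have hcwne : c w ≠ c u' :=
          h1 w u' hwSn (hCsfacts u' hu'C).2 ⟨hwu', hwU, (hCsfacts u' hu'C).1⟩
        have hcw'ne : c w' ≠ c v' :=
          h1 w' v' hw'Sn (hCsfacts v' hv'C).2 ⟨hw'v', hw'U, (hCsfacts v' hv'C).1⟩
        exact boolhelp (cb u) (cb v) true (cb u') (cb v') (c u') (c v') (c w) (c w')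
          hcw hcw' hq'.symm hcwne hcw'ne hiff
      choose ε hε using eps_ex
      set c' : V → Bool := fun v => if v ∈ U then xor (cb v) (ε (gcomp G A v)) else c v
        with hc'
      refine ⟨S', hS'le, c', ?_, ?_⟩
      · intro a b haS hbS hadj
        by_cases haU : a ∈ U <;> by_cases hbU : b ∈ U
        · obtain ⟨hCa, haC⟩ := hUcomp a haU
          have hbC : b ∈ gcomp G A a :=
            (hmem𝒞 _ hCa).2.2.2 a haC b (hUA hbU) hadj
          have hgg : gcomp G A a = gcomp G A b := comp_eq_gcomp (hmem𝒞 _ hCa) hbC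
          have hcbne : cb a ≠ cb b :=
            cb_proper a b (hXA (hUA haU)) (hXA (hUA hbU)) hadj
          simp only [hc', if_pos haU, if_pos hbU, ← hgg]
          revert hcbne
          cases cb a <;> cases cb b <;> cases ε (gcomp G A a) <;> simp
        · obtain ⟨hCa, haC⟩ := hUcomp a haU
          have := hε (gcomp G A a) hCa b hbS hbU a haC hadj.symm
          simp only [hc', if_pos haU, if_neg hbU]
          exact fun h => this h.symm
        · obtain ⟨hCb, hbC⟩ := hUcomp b hbU
          have := hε (gcomp G A b) hCb a haS haU b hbC hadj
          simp only [hc', if_neg haU, if_pos hbU]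
          exact this
        · simp only [hc', if_neg haU, if_neg hbU]
          exact h1 a b (hnotS a haS haU) (hnotS b hbS hbU) ⟨hadj, haU, hbU⟩
      · intro a b haS hbS hab
        obtain ⟨p, p', hpX, hp'X, -, heq⟩ := hM _ hab
        have haX : a ∈ X ∧ b ∈ X := by
          rw [Sym2.eq_iff] at heq
          rcases heq with ⟨rfl, rfl⟩ | ⟨rfl, rfl⟩ <;> exact ⟨by assumption, by assumption⟩
        have haU : a ∉ U := fun h => (hXA (hUA h)) haX.1
        have hbU : b ∉ U := fun h => (hXA (hUA h)) haX.2
        simp only [hc', if_neg haU, if_neg hbU]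
        exact h2 a b (hnotS a haS haU) (hnotS b hbS hbU) hab
    · -- easy direction: G yes → G' yes
      rintro ⟨S, hS, c, h1, h2⟩
      exact ⟨S, hS, c, fun u v hu hv hadj => h1 u v hu hv hadj.1, h2⟩
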